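/- arXiv:1809.05253 — 2 statements merged into one kernel-verified Lean document; each statement's English description precedes it below -/
import Mathlib

section
/- Let D = {D_0,D_1,D_2,D_3} be a symmetric difference family of type H in a finite abelian group G of order v. Then D satisfies condition (d2) if and only if D satisfies both (d3) and (d4). In particular, if (d2) holds with witness sets E_0, E_1, then D_0·D_2 + D_2·D_0 + D_1·D_3 + D_3·D_1 = (Σ|D_i| − v + 1)·G in ℤ[G]. -/
open Finset

noncomputable section

variable {G : Type*}

/-- The element of the group ring `ℤ[G]` associated to a finite subset `D ⊆ G`. -/
def grp [AddCommGroup G] [DecidableEq G] (D : Finset G) : AddMonoidAlgebra ℤ G :=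
  ∑ x ∈ D, AddMonoidAlgebra.single x 1

/-- `D^{(-1)} = {-x : x ∈ D}`. -/
def negSet [AddCommGroup G] [DecidableEq G] (D : Finset G) : Finset G :=
  D.image (fun x => -x)

/-- A subset is symmetric if `D = -D`. -/
def IsSymmetric [AddCommGroup G] [DecidableEq G] (D : Finset G) : Prop :=
  negSet D = D

/-- `G* = G \ {0}` as a finset. -/
def Gstar (G : Type*) [AddCommGroup G] [Fintype G] [DecidableEq G] : Finset G :=
  Finset.univ \ {0}

/-- A difference family of type `H`: four blocks with `λ = Σ|D_i| - |G|`. -/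
def IsTypeH [AddCommGroup G] [Fintype G] [DecidableEq G] (D : Fin 4 → Finset G) : Prop :=
  ∑ i, grp (D i) * grp (negSet (D i)) =
    ((∑ i, ((D i).card : ℤ)) - (Fintype.card G : ℤ)) • grp (Finset.univ : Finset G)
      + (Fintype.card G : ℤ) • AddMonoidAlgebra.single (0 : G) (1 : ℤ)

/-- A difference family of type `H_4^*`: four blocks with `λ = Σ|B_i| - (|G|+1)`. -/
def IsTypeH4star [AddCommGroup G] [Fintype G] [DecidableEq G] (B : Fin 4 → Finset G) : Prop :=
  ∑ i, grp (B i) * grp (negSet (B i)) =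
    ((∑ i, ((B i).card : ℤ)) - ((Fintype.card G : ℤ) + 1)) • grp (Finset.univ : Finset G)
      + ((Fintype.card G : ℤ) + 1) • AddMonoidAlgebra.single (0 : G) (1 : ℤ)

/-- A difference family of type `H_2^*`: two blocks with `λ = Σ|S_i| - (|G|+1)/2`. -/
def IsTypeH2star [AddCommGroup G] [Fintype G] [DecidableEq G] (S : Fin 2 → Finset G) : Prop :=
  ∑ i, grp (S i) * grp (negSet (S i)) =
    ((∑ i, ((S i).card : ℤ)) - ((Fintype.card G : ℤ) + 1) / 2) • grp (Finset.univ : Finset G)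
      + (((Fintype.card G : ℤ) + 1) / 2) • AddMonoidAlgebra.single (0 : G) (1 : ℤ)

/-- Condition (d3). -/
def CondD3 [AddCommGroup G] [Fintype G] [DecidableEq G] (D : Fin 4 → Finset G) : Prop :=
  grp (D 0) * grp (negSet (D 2)) + grp (D 2) * grp (negSet (D 0))
    + grp (D 1) * grp (negSet (D 3)) + grp (D 3) * grp (negSet (D 1)) =
    ((∑ i, ((D i).card : ℤ)) - (Fintype.card G : ℤ) + 1) • grp (Finset.univ : Finset G)

/-- Condition (c1). -/
def CondC1 [AddCommGroup G] [Fintype G] [DecidableEq G] (S : Fin 4 → Finset G) : Prop :=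
  grp (S 0) * grp (negSet (S 2)) + grp (S 2) * grp (negSet (S 0))
    + grp (S 1) * grp (negSet (S 3)) + grp (S 3) * grp (negSet (S 1)) =
    ((∑ i, ((S i).card : ℤ)) - (Fintype.card G : ℤ)) • grp (Finset.univ : Finset G)

/-- Condition (d2). -/
def CondD2 [AddCommGroup G] [Fintype G] [DecidableEq G] (D : Fin 4 → Finset G) : Prop :=
  ∃ E₀ E₁ : Finset G, E₀ ⊆ Gstar G ∧ E₁ ⊆ Gstar G ∧
    grp (D 0) + grp (D 1) - grp (D 2) - grp (D 3) = grp E₀ - grp (Gstar G \ E₀) ∧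
    grp (D 0) + grp (D 3) - grp (D 1) - grp (D 2) = grp E₁ - grp (Gstar G \ E₁) ∧
    IsTypeH4star ![E₀, E₁, Gstar G \ E₀, Gstar G \ E₁]

/-- A building family: eight symmetric, pairwise disjoint subsets partitioning `G*`,
satisfying (a3) and (a4). -/
def IsBuildingFamily [AddCommGroup G] [Fintype G] [DecidableEq G] (A : Fin 8 → Finset G) : Prop :=
  (∀ i, IsSymmetric (A i)) ∧
  (∀ i j, i ≠ j → Disjoint (A i) (A j)) ∧
  (Finset.univ.biUnion A = Gstar G) ∧
  IsTypeH4star ![A 0 ∪ A 1 ∪ A 6 ∪ A 7, A 2 ∪ A 3 ∪ A 4 ∪ A 5,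
    A 0 ∪ A 3 ∪ A 5 ∪ A 6, A 1 ∪ A 2 ∪ A 4 ∪ A 7] ∧
  (∑ i, grp (A i) * grp (A i)) - (∑ i, grp (A i) * grp (A (i + 4))) =
    ((Fintype.card G : ℤ) - 1) • AddMonoidAlgebra.single (0 : G) (1 : ℤ)
      + ((grp (A 0) + grp (A 1) + grp (A 2) + grp (A 3))
        - (grp (A 4) + grp (A 5) + grp (A 6) + grp (A 7)))

end
/-- Condition (d4). -/
def CondD4 {G : Type*} [AddCommGroup G] [Fintype G] [DecidableEq G]
    (D : Fin 4 → Finset G) : Prop :=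
  (∀ x : G, x ≠ 0 → (∑ i, grp (D i)).coeff x = 1 ∨ (∑ i, grp (D i)).coeff x = 3) ∧
  Even ((∑ i, grp (D i)).coeff (0 : G)) ∧
  ¬ (∃! p : Fin 4,
      (grp (D ((![((0 : Fin 4), (1 : Fin 4)), (2, 3), (0, 3), (1, 2)]) p).1)
        + grp (D ((![((0 : Fin 4), (1 : Fin 4)), (2, 3), (0, 3), (1, 2)]) p).2)).coeff (0 : G) = 2)

set_option linter.unusedSectionVars false
section Helpers
variable {G : Type*} [AddCommGroup G] [Fintype G] [DecidableEq G]

lemma grp_apply (D : Finset G) (x : G) : (grp D).coeff x = if x ∈ D then 1 else 0 := by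
  rw [grp, AddMonoidAlgebra.coeff_sum, Finsupp.finset_sum_apply]
  simp [AddMonoidAlgebra.coeff_single, Finsupp.single_apply, eq_comm]

lemma mem_negSet {D : Finset G} {x : G} : x ∈ negSet D ↔ -x ∈ D := by
  constructor
  · rintro h
    rcases Finset.mem_image.mp h with ⟨y, hy, rfl⟩
    simpa using hy
  · intro h
    exact Finset.mem_image.mpr ⟨-x, h, by simp⟩

lemma negSet_eq_self {D : Finset G} (h : ∀ x, x ∈ D → -x ∈ D) : negSet D = D := by
  ext x
  rw [mem_negSet]
  exact ⟨fun hx => by simpa using h _ hx, fun hx => h _ hx⟩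

lemma mem_Gstar {x : G} : x ∈ Gstar G ↔ x ≠ 0 := by
  simp [Gstar]

lemma grp_sdiff {E S : Finset G} (h : E ⊆ S) : grp (S \ E) = grp S - grp E := by
  rw [eq_sub_iff_add_eq, grp, grp, grp, Finset.sum_sdiff h]

lemma grp_singleton_zero : grp ({0} : Finset G) = 1 := by
  rw [grp, Finset.sum_singleton, AddMonoidAlgebra.one_def]

lemma grp_gstar : grp (Gstar G) = grp (Finset.univ : Finset G) - 1 := by
  rw [Gstar, grp_sdiff (Finset.subset_univ _), grp_singleton_zero]

lemma card_Gstar_int : (((Gstar G).card : ℤ)) = (Fintype.card G : ℤ) - 1 := by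
  have h1 : 0 < Fintype.card G := Fintype.card_pos
  rw [Gstar, Finset.card_sdiff_of_subset (Finset.subset_univ _), Finset.card_singleton,
    Finset.card_univ]
  omega

lemma grp_mul_univ (D : Finset G) :
    grp D * grp (Finset.univ : Finset G) = ((D.card : ℤ)) • grp (Finset.univ : Finset G) := by
  have hsingle : ∀ a : G, AddMonoidAlgebra.single a (1:ℤ) * grp (Finset.univ : Finset G)
      = grp (Finset.univ : Finset G) := by
    intro a
    rw [grp, Finset.mul_sum]
    rw [show (fun b => AddMonoidAlgebra.single a (1:ℤ) * AddMonoidAlgebra.single b (1:ℤ))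
        = fun b => AddMonoidAlgebra.single (a+b) (1:ℤ) from ?_]
    · exact Fintype.sum_equiv (Equiv.addLeft a) _ _ (fun b => rfl)
    · funext b
      rw [AddMonoidAlgebra.single_mul_single, one_mul]
  conv_lhs => rw [grp]
  rw [Finset.sum_mul]
  simp_rw [hsingle, Finset.sum_const]
  rw [natCast_zsmul]

lemma smul_cancel_int {k : ℤ} (hk : k ≠ 0) {f g : AddMonoidAlgebra ℤ G}
    (h : k • f = k • g) : f = g := by
  ext x
  have : (k • f).coeff x = (k • g).coeff x := by rw [h]
  rw [AddMonoidAlgebra.coeff_smul_apply, AddMonoidAlgebra.coeff_smul_apply, smul_eq_mul, smul_eq_mul] at this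
  exact mul_left_cancel₀ hk this

lemma grp_univ_sq : grp (Finset.univ : Finset G) * grp (Finset.univ : Finset G)
    = ((Fintype.card G : ℤ) : AddMonoidAlgebra ℤ G) * grp (Finset.univ : Finset G) := by
  rw [grp_mul_univ, Finset.card_univ, zsmul_eq_mul]

end Helpers
section Helpers2
variable {G : Type*} [AddCommGroup G] [Fintype G] [DecidableEq G]

lemma mem_iff_neg_mem {E : Finset G} (hs : negSet E = E) (y : G) : y ∈ E ↔ -y ∈ E := by
  have := mem_negSet (D := E) (x := y)
  rw [hs] at this
  exact this

lemma negSet_sdiff_eq {E : Finset G} (hs : negSet E = E) :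
    negSet (Gstar G \ E) = Gstar G \ E := by
  apply negSet_eq_self
  intro x hx
  rcases Finset.mem_sdiff.mp hx with ⟨hxG, hxE⟩
  refine Finset.mem_sdiff.mpr ⟨mem_Gstar.mpr ?_, fun h => hxE ((mem_iff_neg_mem hs x).mpr h)⟩
  simpa using mem_Gstar.mp hxG

lemma card_sdiff_gstar {E : Finset G} (hE : E ⊆ Gstar G) :
    (((Gstar G \ E).card : ℤ)) = (Fintype.card G : ℤ) - 1 - E.card := by
  rw [Finset.card_sdiff_of_subset hE, Nat.cast_sub (Finset.card_le_card hE), card_Gstar_int]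

lemma core_iff (D : Fin 4 → Finset G) (hsym : ∀ i, IsSymmetric (D i)) (hH : IsTypeH D)
    (E₀ E₁ : Finset G) (hE₀ : E₀ ⊆ Gstar G) (hE₁ : E₁ ⊆ Gstar G)
    (hs₀ : negSet E₀ = E₀) (hs₁ : negSet E₁ = E₁)
    (hX : grp (D 0) + grp (D 1) - grp (D 2) - grp (D 3) = grp E₀ - grp (Gstar G \ E₀))
    (hY : grp (D 0) + grp (D 3) - grp (D 1) - grp (D 2) = grp E₁ - grp (Gstar G \ E₁)) :
    IsTypeH4star ![E₀, E₁, Gstar G \ E₀, Gstar G \ E₁] ↔ CondD3 D := by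
  have hd0 : negSet (D 0) = D 0 := hsym 0
  have hd1 : negSet (D 1) = D 1 := hsym 1
  have hd2 : negSet (D 2) = D 2 := hsym 2
  have hd3 : negSet (D 3) = D 3 := hsym 3
  have hgg := grp_univ_sq (G := G)
  push_cast at hgg
  -- massage hH
  unfold IsTypeH at hH
  rw [Fin.sum_univ_four, Fin.sum_univ_four, hd0, hd1, hd2, hd3, zsmul_eq_mul, zsmul_eq_mul,
    ← AddMonoidAlgebra.one_def] at hH
  push_cast at hH
  -- massage hX, hY
  rw [grp_sdiff hE₀, grp_gstar] at hX
  rw [grp_sdiff hE₁, grp_gstar] at hY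
  -- expand the statement
  unfold IsTypeH4star CondD3
  rw [Fin.sum_univ_four, Fin.sum_univ_four, Fin.sum_univ_four]
  simp only [Matrix.cons_val_zero, Matrix.cons_val_one, Matrix.head_cons,
    Matrix.cons_val_two, Matrix.tail_cons, Matrix.cons_val_three]
  rw [hs₀, hs₁, negSet_sdiff_eq hs₀, negSet_sdiff_eq hs₁, hd0, hd1, hd2, hd3,
    grp_sdiff hE₀, grp_sdiff hE₁, grp_gstar,
    card_sdiff_gstar hE₀, card_sdiff_gstar hE₁, zsmul_eq_mul, zsmul_eq_mul, zsmul_eq_mul,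
    ← AddMonoidAlgebra.one_def]
  constructor
  · intro h4
    push_cast at h4 ⊢
    apply smul_cancel_int (k := 4) (by norm_num)
    rw [zsmul_eq_mul, zsmul_eq_mul]
    push_cast
    linear_combination (-4 : AddMonoidAlgebra ℤ G) * h4 + 4 * hH + 4 * hgg
      - (2 * ((grp (D 0) + grp (D 1) - grp (D 2) - grp (D 3)) + 2 * grp E₀
          - (grp (Finset.univ : Finset G) - 1))) * hX
      - (2 * ((grp (D 0) + grp (D 3) - grp (D 1) - grp (D 2)) + 2 * grp E₁
          - (grp (Finset.univ : Finset G) - 1))) * hY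
  · intro hd3eq
    push_cast at hd3eq ⊢
    apply smul_cancel_int (k := 4) (by norm_num)
    rw [zsmul_eq_mul, zsmul_eq_mul]
    push_cast
    linear_combination (4 : AddMonoidAlgebra ℤ G) * hH + 4 * hgg - 4 * hd3eq
      - (2 * ((grp (D 0) + grp (D 1) - grp (D 2) - grp (D 3)) + 2 * grp E₀
          - (grp (Finset.univ : Finset G) - 1))) * hX
      - (2 * ((grp (D 0) + grp (D 3) - grp (D 1) - grp (D 2)) + 2 * grp E₁
          - (grp (Finset.univ : Finset G) - 1))) * hY

end Helpers2
section Helpers3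
variable {G : Type*} [AddCommGroup G] [Fintype G] [DecidableEq G]

lemma grp01 (D : Finset G) (x : G) : (grp D).coeff x = 0 ∨ (grp D).coeff x = 1 := by
  rw [grp_apply]; split <;> simp

lemma grp_neg_apply {D : Finset G} (h : IsSymmetric D) (x : G) : (grp D).coeff (-x) = (grp D).coeff x := by
  have hh : negSet D = D := h
  rw [grp_apply, grp_apply]
  exact if_congr (Iff.symm (mem_iff_neg_mem hh x)) rfl rfl

lemma grp_val_pm (E : Finset G) (hE : E ⊆ Gstar G) (x : G) :
    (grp E - grp (Gstar G \ E)).coeff x = if x = 0 then 0 else if x ∈ E then 1 else -1 := by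
  rw [AddMonoidAlgebra.coeff_sub, Finsupp.sub_apply, grp_apply, grp_apply]
  by_cases h0 : x = 0
  · subst h0
    rw [if_pos rfl, if_neg (fun h => by simpa using mem_Gstar.mp (hE h)),
      if_neg (fun h => by simpa using mem_Gstar.mp (Finset.mem_sdiff.mp h).1)]
    simp
  · rw [if_neg h0]
    by_cases hm : x ∈ E
    · rw [if_pos hm, if_neg (fun h => (Finset.mem_sdiff.mp h).2 hm)]
      simp [hm]
    · rw [if_neg hm, if_pos (Finset.mem_sdiff.mpr ⟨mem_Gstar.mpr h0, hm⟩)]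
      simp [hm]

lemma apply_comb (A B C E : AddMonoidAlgebra ℤ G) (x : G) :
    (A + B - C - E).coeff x = A.coeff x + B.coeff x - C.coeff x - E.coeff x := by
  rw [AddMonoidAlgebra.coeff_sub, AddMonoidAlgebra.coeff_sub, AddMonoidAlgebra.coeff_add,
    Finsupp.sub_apply, Finsupp.sub_apply, Finsupp.add_apply]

lemma sum_apply4 (D : Fin 4 → Finset G) (x : G) :
    (∑ i, grp (D i)).coeff x = (grp (D 0)).coeff x + (grp (D 1)).coeff x + (grp (D 2)).coeff x
      + (grp (D 3)).coeff x := by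
  rw [Fin.sum_univ_four, AddMonoidAlgebra.coeff_add, AddMonoidAlgebra.coeff_add,
    AddMonoidAlgebra.coeff_add, Finsupp.add_apply, Finsupp.add_apply, Finsupp.add_apply]

end Helpers3
section Helpers4
variable {G : Type*} [AddCommGroup G] [Fintype G] [DecidableEq G]

lemma exu_aux (a0 a1 a2 a3 : ℤ) (h0 : a0 = 0 ∨ a0 = 1) (h1 : a1 = 0 ∨ a1 = 1)
    (h2 : a2 = 0 ∨ a2 = 1) (h3 : a3 = 0 ∨ a3 = 1) (hev : ∃ k, a0+a1+a2+a3 = k + k)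
    (hne : ¬(a0+a1-a2-a3 = 0 ∧ a0+a3-a1-a2 = 0)) :
    ∃! p : Fin 4, ![a0+a1, a2+a3, a0+a3, a1+a2] p = 2 := by
  rcases h0 with rfl|rfl <;> rcases h1 with rfl|rfl <;> rcases h2 with rfl|rfl <;>
    rcases h3 with rfl|rfl <;> first | omega | (unfold ExistsUnique; decide)

lemma not_exu_aux (a0 a1 a2 a3 : ℤ) (h0 : a0 = 0 ∨ a0 = 1) (h1 : a1 = 0 ∨ a1 = 1)
    (h2 : a2 = 0 ∨ a2 = 1) (h3 : a3 = 0 ∨ a3 = 1)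
    (hX : a0+a1-a2-a3 = 0) (hY : a0+a3-a1-a2 = 0) :
    ¬ ∃! p : Fin 4, ![a0+a1, a2+a3, a0+a3, a1+a2] p = 2 := by
  rcases h0 with rfl|rfl <;> rcases h1 with rfl|rfl <;> rcases h2 with rfl|rfl <;>
    rcases h3 with rfl|rfl <;> first | omega | (unfold ExistsUnique; decide)

lemma build_E (F : AddMonoidAlgebra ℤ G) (h0 : F.coeff 0 = 0)
    (hpm : ∀ x : G, x ≠ 0 → F.coeff x = 1 ∨ F.coeff x = -1) (hsymF : ∀ x, F.coeff (-x) = F.coeff x) :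
    ∃ E : Finset G, E ⊆ Gstar G ∧ F = grp E - grp (Gstar G \ E) ∧ negSet E = E := by
  refine ⟨(Gstar G).filter (fun x => F.coeff x = 1), Finset.filter_subset _ _, ?_, ?_⟩
  · ext x
    rw [grp_val_pm _ (Finset.filter_subset _ _) x]
    by_cases hx : x = 0
    · subst hx; rw [if_pos rfl]; exact h0
    · rw [if_neg hx]
      by_cases hm : x ∈ (Gstar G).filter (fun x => F.coeff x = 1)
      · rw [if_pos hm]; exact (Finset.mem_filter.mp hm).2
      · rw [if_neg hm]
        rcases hpm x hx with h | h
        · exact absurd (Finset.mem_filter.mpr ⟨mem_Gstar.mpr hx, h⟩) hm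
        · exact h
  · apply negSet_eq_self
    intro x hx
    rcases Finset.mem_filter.mp hx with ⟨hxG, hxv⟩
    refine Finset.mem_filter.mpr ⟨mem_Gstar.mpr ?_, by rw [hsymF x]; exact hxv⟩
    simpa using mem_Gstar.mp hxG

lemma E_symm (E : Finset G) (hE : E ⊆ Gstar G) (F : AddMonoidAlgebra ℤ G)
    (hFeq : F = grp E - grp (Gstar G \ E)) (hsymF : ∀ x, F.coeff (-x) = F.coeff x) :
    negSet E = E := by
  apply negSet_eq_self
  intro x hx
  have hx0 : x ≠ 0 := by simpa using mem_Gstar.mp (hE hx)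
  have h1 : F.coeff x = 1 := by rw [hFeq, grp_val_pm E hE, if_neg hx0, if_pos hx]
  have h2 : F.coeff (-x) = 1 := by rw [hsymF x]; exact h1
  rw [hFeq, grp_val_pm E hE, if_neg (neg_ne_zero.mpr hx0)] at h2
  by_contra hc
  rw [if_neg hc] at h2
  norm_num at h2

end Helpers4
section Helpers5
variable {G : Type*} [AddCommGroup G] [Fintype G] [DecidableEq G]

lemma pair_apply (D : Fin 4 → Finset G) (p : Fin 4) :
    (grp (D ((![((0 : Fin 4), (1 : Fin 4)), (2, 3), (0, 3), (1, 2)]) p).1)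
      + grp (D ((![((0 : Fin 4), (1 : Fin 4)), (2, 3), (0, 3), (1, 2)]) p).2)).coeff (0 : G)
    = ![(grp (D 0)).coeff (0:G) + (grp (D 1)).coeff (0:G),
        (grp (D 2)).coeff (0:G) + (grp (D 3)).coeff (0:G),
        (grp (D 0)).coeff (0:G) + (grp (D 3)).coeff (0:G),
        (grp (D 1)).coeff (0:G) + (grp (D 2)).coeff (0:G)] p := by
  fin_cases p <;>
    · simp only [Matrix.cons_val_zero, Matrix.cons_val_one, Matrix.head_cons,
        Matrix.cons_val_two, Matrix.tail_cons, Matrix.cons_val_three, Fin.isValue]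
      rw [AddMonoidAlgebra.coeff_add, Finsupp.add_apply]
      rfl

end Helpers5
/-- for a symmetric type-`H` family, (d2) ↔ (d3) ∧ (d4); and (d2) implies
the displayed group-ring identity. -/
theorem d2_iff_d3_and_d4 {G : Type*} [AddCommGroup G] [Fintype G] [DecidableEq G]
    (D : Fin 4 → Finset G) (hsym : ∀ i, IsSymmetric (D i)) (hH : IsTypeH D) :
    (CondD2 D ↔ (CondD3 D ∧ CondD4 D)) ∧
      (CondD2 D →
        grp (D 0) * grp (D 2) + grp (D 2) * grp (D 0)
          + grp (D 1) * grp (D 3) + grp (D 3) * grp (D 1) =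
          ((∑ i, ((D i).card : ℤ)) - (Fintype.card G : ℤ) + 1) •
            grp (Finset.univ : Finset G)) := by
  have o : ∀ (S : Finset G) (x : G), (grp S).coeff x = 0 ∨ (grp S).coeff x = 1 := grp01
  have hXsym : ∀ x : G, (grp (D 0) + grp (D 1) - grp (D 2) - grp (D 3)).coeff (-x)
      = (grp (D 0) + grp (D 1) - grp (D 2) - grp (D 3)).coeff x := by
    intro x
    rw [apply_comb, apply_comb, grp_neg_apply (hsym 0), grp_neg_apply (hsym 1),
      grp_neg_apply (hsym 2), grp_neg_apply (hsym 3)]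
  have hYsym : ∀ x : G, (grp (D 0) + grp (D 3) - grp (D 1) - grp (D 2)).coeff (-x)
      = (grp (D 0) + grp (D 3) - grp (D 1) - grp (D 2)).coeff x := by
    intro x
    rw [apply_comb, apply_comb, grp_neg_apply (hsym 0), grp_neg_apply (hsym 1),
      grp_neg_apply (hsym 2), grp_neg_apply (hsym 3)]
  have main : CondD2 D ↔ CondD3 D ∧ CondD4 D := by
    constructor
    · rintro ⟨E₀, E₁, hE₀, hE₁, hX, hY, h4⟩
      have hs₀ : negSet E₀ = E₀ := E_symm E₀ hE₀ _ hX hXsym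
      have hs₁ : negSet E₁ = E₁ := E_symm E₁ hE₁ _ hY hYsym
      have hX0 : (grp (D 0) + grp (D 1) - grp (D 2) - grp (D 3)).coeff (0:G) = 0 := by
        rw [hX, grp_val_pm E₀ hE₀, if_pos rfl]
      have hY0 : (grp (D 0) + grp (D 3) - grp (D 1) - grp (D 2)).coeff (0:G) = 0 := by
        rw [hY, grp_val_pm E₁ hE₁, if_pos rfl]
      rw [apply_comb] at hX0 hY0
      refine ⟨(core_iff D hsym hH E₀ E₁ hE₀ hE₁ hs₀ hs₁ hX hY).mp h4, ?_, ?_, ?_⟩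
      · intro x hx
        have h1 : (grp (D 0) + grp (D 1) - grp (D 2) - grp (D 3)).coeff x = 1
            ∨ (grp (D 0) + grp (D 1) - grp (D 2) - grp (D 3)).coeff x = -1 := by
          rw [hX, grp_val_pm E₀ hE₀, if_neg hx]
          by_cases hm : x ∈ E₀
          · left; rw [if_pos hm]
          · right; rw [if_neg hm]
        rw [apply_comb] at h1
        rw [sum_apply4]
        have o0 := o (D 0) x; have o1 := o (D 1) x
        have o2 := o (D 2) x; have o3 := o (D 3) x
        omega
      · rw [sum_apply4]
        exact ⟨(grp (D 0)).coeff 0 + (grp (D 1)).coeff 0, by omega⟩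
      · intro hex
        have hex' := (existsUnique_congr (fun p => by rw [pair_apply D p])).mp hex
        exact not_exu_aux _ _ _ _ (o _ _) (o _ _) (o _ _) (o _ _) hX0 hY0 hex'
    · rintro ⟨hd3, hd4a, hd4b, hd4c⟩
      obtain ⟨k, hk⟩ := hd4b
      rw [sum_apply4] at hk
      have h00 : (grp (D 0)).coeff (0:G) + (grp (D 1)).coeff (0:G) - (grp (D 2)).coeff (0:G) - (grp (D 3)).coeff (0:G) = 0
          ∧ (grp (D 0)).coeff (0:G) + (grp (D 3)).coeff (0:G) - (grp (D 1)).coeff (0:G) - (grp (D 2)).coeff (0:G) = 0 := by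
        by_contra hc
        apply hd4c
        apply (existsUnique_congr (fun p => by rw [pair_apply D p])).mpr
        exact exu_aux _ _ _ _ (o _ _) (o _ _) (o _ _) (o _ _) ⟨k, hk⟩ hc
      have hpmX : ∀ x : G, x ≠ 0 → ((grp (D 0) + grp (D 1) - grp (D 2) - grp (D 3)).coeff x = 1
          ∨ (grp (D 0) + grp (D 1) - grp (D 2) - grp (D 3)).coeff x = -1) := by
        intro x hx
        have hs := hd4a x hx
        rw [sum_apply4] at hs
        rw [apply_comb]
        have o0 := o (D 0) x; have o1 := o (D 1) x
        have o2 := o (D 2) x; have o3 := o (D 3) x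
        omega
      have hpmY : ∀ x : G, x ≠ 0 → ((grp (D 0) + grp (D 3) - grp (D 1) - grp (D 2)).coeff x = 1
          ∨ (grp (D 0) + grp (D 3) - grp (D 1) - grp (D 2)).coeff x = -1) := by
        intro x hx
        have hs := hd4a x hx
        rw [sum_apply4] at hs
        rw [apply_comb]
        have o0 := o (D 0) x; have o1 := o (D 1) x
        have o2 := o (D 2) x; have o3 := o (D 3) x
        omega
      obtain ⟨E₀, hE₀, hXeq, hs₀⟩ := build_E _ (by rw [apply_comb]; exact h00.1) hpmX hXsym
      obtain ⟨E₁, hE₁, hYeq, hs₁⟩ := build_E _ (by rw [apply_comb]; exact h00.2) hpmY hYsym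
      exact ⟨E₀, E₁, hE₀, hE₁, hXeq, hYeq,
        (core_iff D hsym hH E₀ E₁ hE₀ hE₁ hs₀ hs₁ hXeq hYeq).mpr hd3⟩
  refine ⟨main, fun h2 => ?_⟩
  have hd3 := (main.mp h2).1
  unfold CondD3 at hd3
  rw [show negSet (D 2) = D 2 from hsym 2, show negSet (D 0) = D 0 from hsym 0,
    show negSet (D 3) = D 3 from hsym 3, show negSet (D 1) = D 1 from hsym 1] at hd3
  exact hd3
end

section
/- Let {A_0,...,A_7} be symmetric subsets of a finite abelian group G satisfying (a1) (pairwise disjoint) and (a2) (union = G∖{0}), and define D_0 = A_4∪A_1∪A_2∪A_3, D_1 = A_5∪A_0∪A_2∪A_3, D_2 = A_6∪A_0∪A_1∪A_3, D_3 = A_7∪A_0∪A_1∪A_2. Then {D_0,D_1,D_2,D_3} is a symmetric difference family of type H if and only if condition (a4) holds: Σ_{i=0}^{7}A_i² − Σ_{i=0}^{7}A_i·A_{i+4} = (|G|−1)·0 + Σ_{i=0}^{3}A_i − Σ_{i=4}^{7}A_i in ℤ[G] (indices mod 8). -/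
open Finset

noncomputable section
variable {G : Type*} [AddCommGroup G] [DecidableEq G]

lemma grp_union' (A B : Finset G) (h : Disjoint A B) :
    grp (A ∪ B) = grp A + grp B := Finset.sum_union h

lemma negSet_union' (A B : Finset G) : negSet (A ∪ B) = negSet A ∪ negSet B :=
  Finset.image_union _ _

variable [Fintype G]

lemma single_mul_grp_univ' (x : G) :
    AddMonoidAlgebra.single x (1:ℤ) * grp (univ : Finset G) = grp univ := by
  unfold grp
  rw [Finset.mul_sum]
  simp only [AddMonoidAlgebra.single_mul_single, one_mul]
  exact Fintype.sum_equiv (Equiv.addLeft x) _ _ (fun g => rfl)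

lemma grp_mul_univ' (S : Finset G) :
    grp S * grp (univ : Finset G) = (S.card : ℤ) • grp (univ : Finset G) := by
  rw [grp, Finset.sum_mul, Finset.sum_congr rfl (fun x _ => single_mul_grp_univ' x)]
  simp [natCast_zsmul]

lemma grp_Gstar' : grp (Gstar G) = grp (univ : Finset G) - 1 := by
  have h0 : ({0} : Finset G) ⊆ univ := subset_univ _
  rw [Gstar, eq_sub_iff_add_eq, grp, grp, AddMonoidAlgebra.one_def]
  rw [← Finset.sum_sdiff h0]
  simp

end

/-- with (a1), (a2) and symmetry, the derived family `{D_i}` is a symmetric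
difference family of type `H` iff (a4) holds. -/
theorem typeH_iff_a4 {G : Type*} [AddCommGroup G] [Fintype G] [DecidableEq G]
    (A : Fin 8 → Finset G) (hsym : ∀ i, IsSymmetric (A i))
    (ha1 : ∀ i j, i ≠ j → Disjoint (A i) (A j))
    (ha2 : Finset.univ.biUnion A = Gstar G) :
    IsTypeH ![A 4 ∪ A 1 ∪ A 2 ∪ A 3, A 5 ∪ A 0 ∪ A 2 ∪ A 3,
        A 6 ∪ A 0 ∪ A 1 ∪ A 3, A 7 ∪ A 0 ∪ A 1 ∪ A 2] ↔
      (∑ i, grp (A i) * grp (A i)) - (∑ i, grp (A i) * grp (A (i + 4))) =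
        ((Fintype.card G : ℤ) - 1) • AddMonoidAlgebra.single (0 : G) (1 : ℤ)
          + ((grp (A 0) + grp (A 1) + grp (A 2) + grp (A 3))
            - (grp (A 4) + grp (A 5) + grp (A 6) + grp (A 7))) := by
  have hdisj : ∀ (i j : Fin 8), i ≠ j → Disjoint (A i) (A j) := ha1
  -- union disjointness helper
  have hd4 : ∀ (i j k l : Fin 8), i ≠ j → i ≠ k → i ≠ l → j ≠ k → j ≠ l → k ≠ l →
      grp (A i ∪ A j ∪ A k ∪ A l) = grp (A i) + grp (A j) + grp (A k) + grp (A l) := by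
    intro i j k l h1 h2 h3 h4 h5 h6
    rw [grp_union', grp_union', grp_union' (A i) (A j) (ha1 _ _ h1)]
    · simp [disjoint_union_left, ha1 _ _ h2, ha1 _ _ h4]
    · simp [disjoint_union_left, ha1 _ _ h3, ha1 _ _ h5, ha1 _ _ h6]
  have hc4 : ∀ (i j k l : Fin 8), i ≠ j → i ≠ k → i ≠ l → j ≠ k → j ≠ l → k ≠ l →
      (A i ∪ A j ∪ A k ∪ A l).card = (A i).card + (A j).card + (A k).card + (A l).card := by
    intro i j k l h1 h2 h3 h4 h5 h6
    rw [Finset.card_union_of_disjoint, Finset.card_union_of_disjoint,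
      Finset.card_union_of_disjoint (ha1 _ _ h1)]
    · simp [disjoint_union_left, ha1 _ _ h2, ha1 _ _ h4]
    · simp [disjoint_union_left, ha1 _ _ h3, ha1 _ _ h5, ha1 _ _ h6]
  have hn4 : ∀ (i j k l : Fin 8),
      negSet (A i ∪ A j ∪ A k ∪ A l) = A i ∪ A j ∪ A k ∪ A l := by
    intro i j k l
    simp only [negSet_union']
    rw [hsym, hsym, hsym, hsym]
  -- sum of grp over all pieces
  have hsumA : grp (A 0) + grp (A 1) + grp (A 2) + grp (A 3) + grp (A 4) + grp (A 5)
      + grp (A 6) + grp (A 7) = grp (univ : Finset G) - 1 := by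
    have h1 : ∑ i : Fin 8, grp (A i) = grp (Gstar G) := by
      rw [← ha2, grp, Finset.sum_biUnion]
      · rfl
      · intro i _ j _ hij
        exact ha1 i j hij
    rw [← grp_Gstar', ← h1, Fin.sum_univ_eight]
  -- cardinality
  have hcardN : (A 0).card + (A 1).card + (A 2).card + (A 3).card + (A 4).card
      + (A 5).card + (A 6).card + (A 7).card + 1 = Fintype.card G := by
    have h1 : ∑ i : Fin 8, (A i).card = (Gstar G).card := by
      rw [← ha2, Finset.card_biUnion]
      intro i _ j _ hij
      exact ha1 i j hij
    have h2 : (Gstar G).card + 1 = Fintype.card G := by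
      rw [Gstar, Finset.card_sdiff_of_subset (subset_univ _)]
      have : 1 ≤ Fintype.card G := Fintype.card_pos
      simp [Finset.card_univ]
      omega
    rw [Fin.sum_univ_eight] at h1
    omega
  have hcast : ((A 0).card : AddMonoidAlgebra ℤ G) + (A 1).card + (A 2).card + (A 3).card
      + (A 4).card + (A 5).card + (A 6).card + (A 7).card + 1 = (Fintype.card G : ℕ) := by
    exact_mod_cast congrArg (Nat.cast : ℕ → AddMonoidAlgebra ℤ G) hcardN
  have hm : ∀ i : Fin 8, grp (A i) * grp (univ : Finset G)
      = ((A i).card : AddMonoidAlgebra ℤ G) * grp (univ : Finset G) := by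
    intro i
    rw [grp_mul_univ']
    rw [zsmul_eq_mul]
    push_cast
    ring
  rw [IsTypeH, Fin.sum_univ_four, Fin.sum_univ_four, Fin.sum_univ_eight, Fin.sum_univ_eight]
  simp only [Matrix.cons_val_zero, Matrix.cons_val_one, Matrix.head_cons,
    Matrix.cons_val_two, Matrix.tail_cons, Matrix.cons_val_three]
  rw [hn4, hn4, hn4, hn4,
    hd4 4 1 2 3 (by decide) (by decide) (by decide) (by decide) (by decide) (by decide),
    hd4 5 0 2 3 (by decide) (by decide) (by decide) (by decide) (by decide) (by decide),
    hd4 6 0 1 3 (by decide) (by decide) (by decide) (by decide) (by decide) (by decide),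
    hd4 7 0 1 2 (by decide) (by decide) (by decide) (by decide) (by decide) (by decide),
    hc4 4 1 2 3 (by decide) (by decide) (by decide) (by decide) (by decide) (by decide),
    hc4 5 0 2 3 (by decide) (by decide) (by decide) (by decide) (by decide) (by decide),
    hc4 6 0 1 3 (by decide) (by decide) (by decide) (by decide) (by decide) (by decide),
    hc4 7 0 1 2 (by decide) (by decide) (by decide) (by decide) (by decide) (by decide)]
  simp only [← AddMonoidAlgebra.one_def, zsmul_eq_mul]
  push_cast
  norm_num [(show (4:Fin 8)+4 = 0 by decide), (show (5:Fin 8)+4 = 1 by decide),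
    (show (6:Fin 8)+4 = 2 by decide), (show (7:Fin 8)+4 = 3 by decide),
    (show (0:Fin 8)+4 = 4 by decide), (show (1:Fin 8)+4 = 5 by decide),
    (show (2:Fin 8)+4 = 6 by decide), (show (3:Fin 8)+4 = 7 by decide)]
  constructor <;> intro h
  · linear_combination h - (2*(grp (A 0)+grp (A 1)+grp (A 2)+grp (A 3)) - 1) * hsumA - 2*(hm 0 + hm 1 + hm 2 + hm 3)
      + grp (univ : Finset G) * hcast
  · linear_combination h + (2*(grp (A 0)+grp (A 1)+grp (A 2)+grp (A 3)) - 1) * hsumA + 2*(hm 0 + hm 1 + hm 2 + hm 3)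
      - grp (univ : Finset G) * hcast
end
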